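/- Positive semidefiniteness inequality for the coupling matrix. For all real numbers a_0, a_1 with 0 ≤ a_0 ≤ a_1 ≤ 1, setting a := (a_0 + a_1)/2, one has (√(1 − a) − √(1 − a_0) + 1) · (√(1 − a) − √(1 − a_1) + 1) ≥ 1. Consequently the symmetric 2×2 matrix with diagonal entries a_0·(√(1−a) − √(1−a_0) + 1)/2 and a_0·(√(1−a) − √(1−a_1) + 1)/2 and off-diagonal entries a_0/2 is positive semidefinite. -/

import Mathlib

open Real

lemma psd_two_aux (A B C : ℝ) (hA : 0 ≤ A) (hC : 0 ≤ C) (hdet : B ^ 2 ≤ A * C) :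
    Matrix.PosSemidef !![A, B; B, C] := by
  rw [Matrix.posSemidef_iff_dotProduct_mulVec]
  constructor
  · ext i j
    fin_cases i <;> fin_cases j <;>
      simp [Matrix.conjTranspose, Matrix.transpose, Matrix.vecHead, Matrix.vecTail]
  · intro v
    have hv : dotProduct (star v) (Matrix.mulVec !![A, B; B, C] v) =
        A * v 0 ^ 2 + 2 * B * (v 0 * v 1) + C * v 1 ^ 2 := by
      simp [dotProduct, Matrix.mulVec, Fin.sum_univ_two, Matrix.vecHead, Matrix.vecTail]
      ring
    rw [hv]
    rcases eq_or_lt_of_le hA with hA0 | hA0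
    · have hB : B = 0 := by nlinarith [sq_nonneg B]
      rw [← hA0, hB]
      nlinarith [sq_nonneg (v 1)]
    · nlinarith [sq_nonneg (A * v 0 + B * v 1),
        mul_nonneg (sub_nonneg.2 hdet) (sq_nonneg (v 1))]

/-- **Positive semidefiniteness inequality for the coupling matrix.**
For `0 ≤ a₀ ≤ a₁ ≤ 1` and `a := (a₀ + a₁)/2`, one has
`(√(1−a) − √(1−a₀) + 1)·(√(1−a) − √(1−a₁) + 1) ≥ 1`; consequently the
symmetric 2×2 matrix with diagonal entries `a₀·(√(1−a) − √(1−a₀) + 1)/2` and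
`a₀·(√(1−a) − √(1−a₁) + 1)/2` and off-diagonal entries `a₀/2` is positive
semidefinite. -/
theorem coupling_matrix_posSemidef (a0 a1 : ℝ) (h0 : 0 ≤ a0) (h01 : a0 ≤ a1)
    (h1 : a1 ≤ 1) (a : ℝ) (ha : a = (a0 + a1) / 2) :
    (Real.sqrt (1 - a) - Real.sqrt (1 - a0) + 1) *
        (Real.sqrt (1 - a) - Real.sqrt (1 - a1) + 1) ≥ 1 ∧
    Matrix.PosSemidef
      !![a0 * (Real.sqrt (1 - a) - Real.sqrt (1 - a0) + 1) / 2, a0 / 2;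
         a0 / 2, a0 * (Real.sqrt (1 - a) - Real.sqrt (1 - a1) + 1) / 2] := by
  set x0 := Real.sqrt (1 - a0) with hx0def
  set x := Real.sqrt (1 - a) with hxdef
  set x1 := Real.sqrt (1 - a1) with hx1def
  have h0a : (0:ℝ) ≤ 1 - a0 := by linarith
  have h1a : (0:ℝ) ≤ 1 - a1 := by linarith
  have haa : (0:ℝ) ≤ 1 - a := by rw [ha]; linarith
  have hx0sq : x0 ^ 2 = 1 - a0 := Real.sq_sqrt h0a
  have hxsq : x ^ 2 = 1 - a := Real.sq_sqrt haa
  have hx1sq : x1 ^ 2 = 1 - a1 := Real.sq_sqrt h1a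
  have hx0n : 0 ≤ x0 := Real.sqrt_nonneg _
  have hxn : 0 ≤ x := Real.sqrt_nonneg _
  have hx1n : 0 ≤ x1 := Real.sqrt_nonneg _
  have hx0le : x0 ≤ 1 := by nlinarith
  have hx1le : x1 ≤ 1 := by nlinarith
  have hxle : x ≤ 1 := by nlinarith
  have h2x : 2 * x ^ 2 = x0 ^ 2 + x1 ^ 2 := by rw [hx0sq, hxsq, hx1sq, ha]; ring
  have hsum : x0 + x1 ≤ 2 * x := by nlinarith [sq_nonneg (x0 - x1)]
  have key : (x - x0 + 1) * (x - x1 + 1) ≥ 1 := by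
    nlinarith [mul_nonneg (by linarith : (0:ℝ) ≤ 2 * x - x0 - x1)
      (by linarith : (0:ℝ) ≤ 2 - x0 - x1)]
  refine ⟨key, ?_⟩
  apply psd_two_aux
  · have hx0' : x0 - x ≤ 1 := by linarith
    nlinarith
  · have : x1 ≤ x := by nlinarith [sq_nonneg (x0 - x1)]
    nlinarith
  · nlinarith [mul_le_mul_of_nonneg_left key (mul_nonneg h0 h0)]
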